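/- Let a, x ∈ S(0,∞) and C > 0. If μ(s; x) ≤ C·μ(s/C; a) for every s > 0, then K_u(x) ≤ C·K_u(a) for every u > 0 (with the same constant C). -/

import Mathlib

open MeasureTheory Filter Set
open scoped ENNReal NNReal

/-- Lebesgue measure on `(0, ∞)`. -/
noncomputable def mLeb : Measure ℝ := volume.restrict (Set.Ioi (0:ℝ))

/-- The distribution function `d_f(s) = m {t ∈ (0,∞) : |f t| > s}`. -/
noncomputable def distFun (f : ℝ → ℝ) (s : ℝ) : ℝ≥0∞ := mLeb {t | s < |f t|}

/-- `f ∈ S(0,∞)`: `f` is measurable and `d_f(s) < ∞` for some `s > 0`. -/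
def MemS (f : ℝ → ℝ) : Prop := Measurable f ∧ ∃ s > (0:ℝ), distFun f s < ⊤

/-- `‖g‖₀ = m (supp g)`, the `L₀`-group-norm. -/
noncomputable def norm0 (g : ℝ → ℝ) : ℝ≥0∞ := mLeb (Function.support g)

/-- `‖h‖∞`, the essential supremum norm on `(0,∞)`. -/
noncomputable def normInf (h : ℝ → ℝ) : ℝ≥0∞ := eLpNorm h ⊤ mLeb

/-- `g ∈ L₀(0,∞)`: measurable with support of finite measure. -/
def MemL0 (g : ℝ → ℝ) : Prop := Measurable g ∧ norm0 g < ⊤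

/-- `h ∈ L∞(0,∞)`: measurable and essentially bounded. -/
def MemLinf (h : ℝ → ℝ) : Prop := Measurable h ∧ normInf h < ⊤

/-- The K-functional `K_u(f) = inf {‖g‖₀ + u‖h‖∞ : f = g + h, g ∈ L₀, h ∈ L∞}`. -/
noncomputable def Kfun (u : ℝ) (f : ℝ → ℝ) : ℝ≥0∞ :=
  ⨅ (g : ℝ → ℝ) (h : ℝ → ℝ) (_ : MemL0 g) (_ : MemLinf h) (_ : f = g + h),
    norm0 g + ENNReal.ofReal u * normInf h

/-- The decreasing rearrangement `μ(t; f) = inf {s ≥ 0 : d_f(s) ≤ t}`. -/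
noncomputable def rearr (f : ℝ → ℝ) (t : ℝ) : ℝ :=
  sInf {s : ℝ | 0 ≤ s ∧ distFun f s ≤ ENNReal.ofReal t}

/-- The Δ-norm `‖f‖_S = inf_{s>0} [s + d_f(s)]`. -/
noncomputable def normS (f : ℝ → ℝ) : ℝ≥0∞ :=
  ⨅ (s : ℝ) (_ : 0 < s), ENNReal.ofReal s + distFun f s

lemma distFun_mono (f : ℝ → ℝ) {s₁ s₂ : ℝ} (h : s₁ ≤ s₂) : distFun f s₂ ≤ distFun f s₁ :=
  measure_mono fun w hw => lt_of_le_of_lt h hw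

lemma exists_distFun_le (f : ℝ → ℝ) (hf : MemS f) {t : ℝ} (ht : 0 < t) :
    ∃ s, 0 ≤ s ∧ distFun f s ≤ ENNReal.ofReal t := by
  obtain ⟨hm, s₀, hs₀, hfin⟩ := hf
  set A : ℕ → Set ℝ := fun n => {w | s₀ + n < |f w|} with hA
  have hmeas : ∀ n, NullMeasurableSet (A n) mLeb :=
    fun n => (measurableSet_lt measurable_const hm.abs).nullMeasurableSet
  have hanti : Antitone A := by
    intro n m hnm w hw
    simp only [hA, Set.mem_setOf_eq] at hw ⊢
    have hcast : (n:ℝ) ≤ m := Nat.cast_le.mpr hnm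
    linarith
  have hempty : ⋂ n, A n = ∅ := by
    ext w
    simp only [Set.mem_iInter, Set.mem_empty_iff_false, iff_false, not_forall, hA]
    obtain ⟨n, hn⟩ := exists_nat_gt (|f w| - s₀)
    exact ⟨n, by simp only [Set.mem_setOf_eq, not_lt]; linarith⟩
  have hfin' : ∃ n, mLeb (A n) ≠ ∞ := by
    refine ⟨0, ?_⟩
    have : A 0 = {w | s₀ < |f w|} := by simp [hA]
    rw [this]
    exact hfin.ne
  have htend := tendsto_measure_iInter_atTop hmeas hanti hfin'
  rw [hempty, measure_empty] at htend
  have h0 : (0:ℝ≥0∞) < ENNReal.ofReal t := ENNReal.ofReal_pos.mpr ht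
  obtain ⟨n, hn⟩ := (htend.eventually (gt_mem_nhds h0)).exists
  exact ⟨s₀ + n, by positivity, le_of_lt hn⟩

lemma distFun_le_of_rearr_lt (f : ℝ → ℝ) (hf : MemS f) {t r : ℝ} (ht : 0 < t)
    (hr : rearr f t < r) : distFun f r ≤ ENNReal.ofReal t := by
  obtain ⟨s, hs0, hsle⟩ := exists_distFun_le f hf ht
  have hne : {s : ℝ | 0 ≤ s ∧ distFun f s ≤ ENNReal.ofReal t}.Nonempty := ⟨s, hs0, hsle⟩
  obtain ⟨s', hs'mem, hs'r⟩ := exists_lt_of_csInf_lt hne hr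
  exact le_trans (distFun_mono f hs'r.le) hs'mem.2


/-- if `μ(s; x) ≤ C·μ(s/C; a)` for every `s > 0`, then
`K_u(x) ≤ C·K_u(a)` for every `u > 0` (same constant `C`). -/
theorem stmt13 (a x : ℝ → ℝ) (ha : MemS a) (hx : MemS x) (C : ℝ) (hC : 0 < C)
    (h : ∀ s > (0:ℝ), rearr x s ≤ C * rearr a (s / C)) :
    ∀ u > (0:ℝ), Kfun u x ≤ ENNReal.ofReal C * Kfun u a := by
  intro u hu
  have hCne : (ENNReal.ofReal C) ≠ 0 := by
    simp [ENNReal.ofReal_eq_zero, not_le, hC]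
  have key : ∀ g h2 : ℝ → ℝ, MemL0 g → MemLinf h2 → a = g + h2 →
      Kfun u x ≤ ENNReal.ofReal C * (norm0 g + ENNReal.ofReal u * normInf h2) := by
    intro g h2 hg hh2 heq
    refine ENNReal.le_of_forall_pos_le_add ?_
    intro ε hε _
    have hMfin : normInf h2 ≠ ∞ := hh2.2.ne
    set M : ℝ := (normInf h2).toReal with hMdef
    have hM0 : 0 ≤ M := ENNReal.toReal_nonneg
    have hε' : (0:ℝ) < ε := hε
    set δ : ℝ := (ε:ℝ) / (2*u) with hδdef
    have hδ : 0 < δ := div_pos hε' (by linarith)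
    set s : ℝ := M + δ / C with hsdef
    have hs : 0 < s := by
      have h1 : 0 < δ / C := div_pos hδ hC
      rw [hsdef]
      linarith
    set r : ℝ := C * M + 2*δ with hrdef
    have hr : 0 < r := by nlinarith
    -- a.e. bound on h2
    have hae : ∀ᵐ w ∂mLeb, |h2 w| ≤ M := by
      have h1 := MeasureTheory.ae_le_eLpNormEssSup (f := h2) (μ := mLeb)
      filter_upwards [h1] with w hw
      have h2' : (‖h2 w‖₊ : ℝ≥0∞) ≤ normInf h2 := by
        rw [normInf, eLpNorm_exponent_top]; exact hw
      have h3 := ENNReal.toReal_mono hMfin h2'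
      simpa [Real.norm_eq_abs] using h3
    -- step 1: distFun a s ≤ norm0 g
    have hstep1 : distFun a s ≤ norm0 g := by
      have hsub : {w | s < |a w|} ⊆ Function.support g ∪ {w | ¬ (|h2 w| ≤ M)} := by
        intro w hw
        simp only [Set.mem_setOf_eq] at hw
        by_cases hgw : g w = 0
        · right
          simp only [Set.mem_setOf_eq, not_le]
          have haw : a w = h2 w := by
            have := congrFun heq w
            simp only [Pi.add_apply, hgw] at this
            linarith [this]
          rw [haw, hsdef] at hw
          have h4 : 0 < δ / C := div_pos hδ hC
          linarith
        · exact Or.inl (Function.mem_support.mpr hgw)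
      have hnull : mLeb {w | ¬ (|h2 w| ≤ M)} = 0 := by
        rw [← ae_iff] at *
        exact hae
      calc distFun a s ≤ mLeb (Function.support g ∪ {w | ¬ (|h2 w| ≤ M)}) := measure_mono hsub
        _ ≤ mLeb (Function.support g) + mLeb {w | ¬ (|h2 w| ≤ M)} := measure_union_le _ _
        _ = norm0 g := by rw [hnull, add_zero]; rfl
    -- step 2: distFun x r ≤ ofReal C * distFun a s
    have hstep2 : distFun x r ≤ ENNReal.ofReal C * distFun a s := by
      refine ENNReal.le_of_forall_pos_le_add ?_
      intro η hη _
      have hvfin : distFun a s ≠ ∞ := (lt_of_le_of_lt hstep1 hg.2).ne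
      set v : ℝ := (distFun a s).toReal with hvdef
      have hv0 : 0 ≤ v := ENNReal.toReal_nonneg
      have hη' : (0:ℝ) < η := hη
      set t : ℝ := C * v + η with htdef
      have ht : 0 < t := by nlinarith
      have h1 : rearr a (t / C) ≤ s := by
        apply csInf_le ⟨0, fun y hy => hy.1⟩
        refine ⟨hs.le, ?_⟩
        have hvt : v ≤ t / C := by
          rw [htdef, le_div_iff₀ hC]
          nlinarith
        calc distFun a s = ENNReal.ofReal v := (ENNReal.ofReal_toReal hvfin).symm
          _ ≤ ENNReal.ofReal (t/C) := ENNReal.ofReal_le_ofReal hvt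
      have h2' : rearr x t ≤ C * s :=
        le_trans (h t ht) (mul_le_mul_of_nonneg_left h1 hC.le)
      have h3 : rearr x t < r := by
        apply lt_of_le_of_lt h2'
        rw [hsdef, hrdef]
        have : C * (δ / C) = δ := by field_simp
        nlinarith
      calc distFun x r ≤ ENNReal.ofReal t := distFun_le_of_rearr_lt x hx ht h3
        _ = ENNReal.ofReal (C*v) + ENNReal.ofReal (η:ℝ) := by
            rw [← ENNReal.ofReal_add (by positivity) (NNReal.coe_nonneg η)]
        _ = ENNReal.ofReal C * distFun a s + η := by
            rw [ENNReal.ofReal_mul hC.le, hvdef, ENNReal.ofReal_toReal hvfin,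
              ENNReal.ofReal_coe_nnreal]
    -- decomposition of x
    set h' : ℝ → ℝ := fun w => max (-r) (min (x w) r) with hh'def
    set g' : ℝ → ℝ := fun w => x w - h' w with hg'def
    have hxeq : x = g' + h' := by
      funext w
      simp only [Pi.add_apply, hg'def]
      ring
    have hsupp : Function.support g' ⊆ {w | r < |x w|} := by
      intro w hw
      simp only [Function.mem_support, hg'def] at hw
      by_contra hcon
      simp only [Set.mem_setOf_eq, not_lt] at hcon
      have hx1 : x w ≤ r := le_of_abs_le hcon
      have hx2 : -r ≤ x w := neg_le_of_abs_le hcon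
      apply hw
      simp only [hh'def]
      rw [min_eq_left hx1, max_eq_right hx2]
      ring
    have hg'n : norm0 g' ≤ ENNReal.ofReal C * norm0 g :=
      le_trans (le_trans (measure_mono hsupp) hstep2) (mul_le_mul_right hstep1 _)
    have hh'meas : Measurable h' := measurable_const.max (hx.1.min measurable_const)
    have hg'mem : MemL0 g' :=
      ⟨hx.1.sub hh'meas, lt_of_le_of_lt hg'n
        (ENNReal.mul_lt_top ENNReal.ofReal_lt_top hg.2)⟩
    have hh'bound : normInf h' ≤ ENNReal.ofReal r := by
      rw [normInf, eLpNorm_exponent_top]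
      apply eLpNormEssSup_le_of_ae_bound (C := r)
      filter_upwards with w
      rw [Real.norm_eq_abs]
      simp only [hh'def]
      rw [abs_le]
      exact ⟨le_max_left _ _, max_le (by linarith) (min_le_right _ _)⟩
    have hh'mem : MemLinf h' :=
      ⟨hh'meas, lt_of_le_of_lt hh'bound ENNReal.ofReal_lt_top⟩
    have hK : Kfun u x ≤ norm0 g' + ENNReal.ofReal u * normInf h' :=
      iInf_le_of_le g' (iInf_le_of_le h' (iInf_le_of_le hg'mem (iInf_le_of_le hh'mem
        (iInf_le _ hxeq))))
    have heps : u * (2*δ) = (ε:ℝ) := by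
      rw [hδdef]
      field_simp
    have hur : ENNReal.ofReal u * ENNReal.ofReal r
        = ENNReal.ofReal C * (ENNReal.ofReal u * normInf h2) + (ε:ℝ≥0∞) := by
      have h1 : u * r = C * (u * M) + (ε:ℝ) := by rw [hrdef, ← heps]; ring
      rw [← ENNReal.ofReal_mul hu.le, h1,
        ENNReal.ofReal_add (mul_nonneg hC.le (mul_nonneg hu.le hM0)) (NNReal.coe_nonneg ε),
        ENNReal.ofReal_mul hC.le, ENNReal.ofReal_mul hu.le, hMdef,
        ENNReal.ofReal_toReal hMfin, ENNReal.ofReal_coe_nnreal]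
    calc Kfun u x ≤ norm0 g' + ENNReal.ofReal u * normInf h' := hK
      _ ≤ ENNReal.ofReal C * norm0 g + ENNReal.ofReal u * ENNReal.ofReal r :=
          add_le_add hg'n (mul_le_mul_right hh'bound _)
      _ = ENNReal.ofReal C * norm0 g + (ENNReal.ofReal C * (ENNReal.ofReal u * normInf h2) + ε) := by
          rw [hur]
      _ = ENNReal.ofReal C * (norm0 g + ENNReal.ofReal u * normInf h2) + ε := by ring
  -- assemble
  rw [mul_comm, ← ENNReal.div_le_iff_le_mul (Or.inl hCne) (Or.inl ENNReal.ofReal_ne_top)]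
  unfold Kfun
  refine le_iInf fun g => le_iInf fun h2 => le_iInf fun hg => le_iInf fun hh2 => le_iInf fun heq => ?_
  rw [ENNReal.div_le_iff_le_mul (Or.inl hCne) (Or.inl ENNReal.ofReal_ne_top), mul_comm]
  exact key g h2 hg hh2 heq
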